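/- Define δ_a(u) = u − 2·log(exp(u/2 − 1) + 1) for u ∈ ℝ. Then: (i) δ_a′(u) = 1/(1 + exp(u/2 − 1)), which is strictly positive for all u ∈ ℝ; (ii) δ_a is strictly increasing and concave on ℝ (δ_a′ is strictly decreasing); (iii) for any unit vectors z_i, z_j ∈ ℝ^d (‖z_i‖₂ = ‖z_j‖₂ = 1), one has 1/(1 + exp(−⟨z_i, z_j⟩)) = δ_a′(‖z_i − z_j‖₂²). Hence the sigmoid attention f = 1/(1 + exp(−⟨z_i, z_j⟩)) is the derivative of the non-decreasing concave penalty δ_a evaluated at the squared distance. -/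

import Mathlib

open Finset

lemma hd_aux : ∀ u : ℝ, HasDerivAt
    (fun v : ℝ => v - 2 * Real.log (Real.exp (v / 2 - 1) + 1))
    (1 / (1 + Real.exp (u / 2 - 1))) u := by
  intro u
  have hpos : Real.exp (u / 2 - 1) + 1 > 0 := by positivity
  have h1 : HasDerivAt (fun v : ℝ => v / 2 - 1) (1 / 2) u := by
    simpa using ((hasDerivAt_id u).div_const 2).sub_const 1
  have h2 : HasDerivAt (fun v : ℝ => Real.exp (v / 2 - 1) + 1)
      (Real.exp (u / 2 - 1) * (1 / 2)) u := (h1.exp).add_const 1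
  have h3 : HasDerivAt (fun v : ℝ => Real.log (Real.exp (v / 2 - 1) + 1))
      (Real.exp (u / 2 - 1) * (1 / 2) / (Real.exp (u / 2 - 1) + 1)) u :=
    h2.log (ne_of_gt hpos)
  have h4 : HasDerivAt (fun v : ℝ => v - 2 * Real.log (Real.exp (v / 2 - 1) + 1))
      (1 - 2 * (Real.exp (u / 2 - 1) * (1 / 2) / (Real.exp (u / 2 - 1) + 1))) u :=
    (hasDerivAt_id u).sub ((h3.const_mul (2 : ℝ)))
  convert h4 using 1
  field_simp
  ring

lemma sa_aux : StrictAnti (fun u : ℝ => 1 / (1 + Real.exp (u / 2 - 1))) := by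
  intro a b hab
  have h1 : Real.exp (a / 2 - 1) < Real.exp (b / 2 - 1) :=
    Real.exp_lt_exp.2 (by linarith)
  have hpa : (0:ℝ) < 1 + Real.exp (a / 2 - 1) := by positivity
  apply one_div_lt_one_div_of_lt hpa
  linarith

theorem stmt_16 (d : ℕ) (zi zj : Fin d → ℝ)
    (hzi : ∑ c, (zi c) ^ 2 = 1) (hzj : ∑ c, (zj c) ^ 2 = 1) :
    (∀ u : ℝ, HasDerivAt
        (fun v : ℝ => v - 2 * Real.log (Real.exp (v / 2 - 1) + 1))
        (1 / (1 + Real.exp (u / 2 - 1))) u)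
    ∧ (∀ u : ℝ, 0 < 1 / (1 + Real.exp (u / 2 - 1)))
    ∧ StrictMono (fun v : ℝ => v - 2 * Real.log (Real.exp (v / 2 - 1) + 1))
    ∧ ConcaveOn ℝ Set.univ
        (fun v : ℝ => v - 2 * Real.log (Real.exp (v / 2 - 1) + 1))
    ∧ StrictAnti (fun u : ℝ => 1 / (1 + Real.exp (u / 2 - 1)))
    ∧ 1 / (1 + Real.exp (-(∑ c, zi c * zj c)))
        = 1 / (1 + Real.exp ((∑ c, (zi c - zj c) ^ 2) / 2 - 1)) := by
  have hderiv : ∀ u : ℝ, deriv (fun v : ℝ => v - 2 * Real.log (Real.exp (v / 2 - 1) + 1)) u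
      = 1 / (1 + Real.exp (u / 2 - 1)) := fun u => (hd_aux u).deriv
  refine ⟨hd_aux, fun u => by positivity, ?_, ?_, sa_aux, ?_⟩
  · apply strictMono_of_deriv_pos
    intro u
    rw [hderiv u]
    positivity
  · apply StrictConcaveOn.concaveOn
    apply StrictAnti.strictConcaveOn_univ_of_deriv
    · have h1 : Continuous fun v : ℝ => Real.exp (v / 2 - 1) + 1 := by continuity
      have h2 : Continuous fun v : ℝ => Real.log (Real.exp (v / 2 - 1) + 1) :=
        h1.log (fun x => by positivity)
      exact continuous_id.sub (continuous_const.mul h2)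
    · intro a b hab
      rw [hderiv a, hderiv b]
      exact sa_aux hab
  · have : ∑ c, (zi c - zj c) ^ 2 = 2 - 2 * ∑ c, zi c * zj c := by
      have : ∀ c, (zi c - zj c)^2 = (zi c)^2 + (zj c)^2 - 2*(zi c * zj c) := by
        intro c; ring
      simp_rw [this, Finset.sum_sub_distrib, Finset.sum_add_distrib, hzi, hzj,
        ← Finset.mul_sum]
      ring
    rw [this]; ring_nf
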